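/- For real a > b > 0, the logarithm of the binomial coefficient satisfies log(Γ(an+1)/(Γ(bn+1)·Γ((a-b)n+1))) = n·a·Φ(b/a) + (1/2)·log(a/(2π·b·(a-b)·n)) + O(1/n) as n → ∞, where Φ(x) = -x·log(x) - (1-x)·log(1-x). -/

import Mathlib

open Real Asymptotics Filter

noncomputable def entropy (x : ℝ) : ℝ := -x * Real.log x - (1 - x) * Real.log (1 - x)

noncomputable def hfun (x : ℝ) : ℝ := (x + 1/2) * (Real.log (x+1) - Real.log x) - 1
noncomputable def qfun (x : ℝ) : ℝ := (Real.log (x+1) - Real.log x) + (x + 1/2) * (1/(x+1) - 1/x)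
noncomputable def gfun (x : ℝ) : ℝ := hfun x - (1/(12*x) - 1/(12*(x+1)))
noncomputable def pfun (x : ℝ) : ℝ := qfun x + (1/(12*x^2) - 1/(12*(x+1)^2))

lemma pos_aux (f f' : ℝ → ℝ) (hd : ∀ x ∈ Set.Ioi (0:ℝ), HasDerivAt f (f' x) x)
    (hs : ∀ x ∈ Set.Ioi (0:ℝ), f' x ≤ 0) (hl : Tendsto f atTop (nhds 0)) :
    ∀ x ∈ Set.Ioi (0:ℝ), 0 ≤ f x := by
  intro x hx
  have hanti : AntitoneOn f (Set.Ici x) := by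
    apply antitoneOn_of_deriv_nonpos (convex_Ici x)
    · exact fun y hy => (hd y (Set.mem_Ioi.2 (lt_of_lt_of_le (Set.mem_Ioi.1 hx) hy))).continuousAt.continuousWithinAt
    · intro y hy
      rw [interior_Ici] at hy
      exact ((hd y (Set.mem_Ioi.2 ((Set.mem_Ioi.1 hx).trans (Set.mem_Ioi.1 hy)))).differentiableAt).differentiableWithinAt
    · intro y hy
      rw [interior_Ici] at hy
      rw [(hd y (Set.mem_Ioi.2 ((Set.mem_Ioi.1 hx).trans (Set.mem_Ioi.1 hy)))).deriv]
      exact hs y (Set.mem_Ioi.2 ((Set.mem_Ioi.1 hx).trans (Set.mem_Ioi.1 hy)))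
  refine le_of_tendsto hl ?_
  filter_upwards [eventually_ge_atTop x] with y hy
  exact hanti Set.self_mem_Ici hy hy

lemma neg_aux (f f' : ℝ → ℝ) (hd : ∀ x ∈ Set.Ioi (0:ℝ), HasDerivAt f (f' x) x)
    (hs : ∀ x ∈ Set.Ioi (0:ℝ), 0 ≤ f' x) (hl : Tendsto f atTop (nhds 0)) :
    ∀ x ∈ Set.Ioi (0:ℝ), f x ≤ 0 := by
  intro x hx
  have := pos_aux (fun y => -f y) (fun y => -f' y)
    (fun y hy => (hd y hy).neg) (fun y hy => neg_nonpos.2 (hs y hy)) (by simpa using hl.neg) x hx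
  linarith

lemma hasDerivAt_qfun {x : ℝ} (hx : 0 < x) :
    HasDerivAt qfun (1/(2*x^2*(x+1)^2)) x := by
  have h1 : HasDerivAt (fun y : ℝ => Real.log (y+1)) (1/(x+1)) x := by
    simpa using (((hasDerivAt_id x).add_const 1).log (by positivity))
  have h2 : HasDerivAt Real.log (1/x) x := by
    simpa [one_div] using Real.hasDerivAt_log hx.ne'
  have h3 : HasDerivAt (fun y : ℝ => (y+1)⁻¹) (-1/(x+1)^2) x := by
    simpa using ((hasDerivAt_id x).add_const 1).fun_inv (by positivity)
  have h4 : HasDerivAt (fun y : ℝ => y⁻¹) (-1/x^2) x := by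
    simpa using (hasDerivAt_id x).fun_inv hx.ne'
  have h5 : HasDerivAt (fun y : ℝ => (y + 1/2) * (1/(y+1) - 1/y))
      (1 * (1/(x+1) - 1/x) + (x + 1/2) * ((-1/(x+1)^2) - (-1/x^2))) x := by
    have := ((hasDerivAt_id x).add_const (1/2)).mul
      ((h3.sub h4).congr_deriv rfl)
    simpa [one_div] using ((hasDerivAt_id x).add_const (1/2:ℝ)).fun_mul
      (by simpa [one_div] using h3.fun_sub h4)
  have := (h1.fun_sub h2).fun_add h5
  refine this.congr_deriv ?_
  have hx1 : (x:ℝ) + 1 ≠ 0 := by positivity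
  field_simp
  ring

lemma hasDerivAt_hfun {x : ℝ} (hx : 0 < x) : HasDerivAt hfun (qfun x) x := by
  have h1 : HasDerivAt (fun y : ℝ => Real.log (y+1)) (1/(x+1)) x := by
    simpa using (((hasDerivAt_id x).add_const 1).log (by positivity))
  have h2 : HasDerivAt Real.log (1/x) x := by
    simpa [one_div] using Real.hasDerivAt_log hx.ne'
  have h5 : HasDerivAt (fun y : ℝ => (y + 1/2) * (Real.log (y+1) - Real.log y))
      (1 * (Real.log (x+1) - Real.log x) + (x + 1/2) * (1/(x+1) - 1/x)) x :=
    ((hasDerivAt_id x).add_const (1/2:ℝ)).mul (h1.sub h2)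
  have := h5.sub_const 1
  unfold hfun qfun
  refine this.congr_deriv ?_
  ring

lemma hasDerivAt_inv_sq {c x : ℝ} (h : 0 < x + c) :
    HasDerivAt (fun y : ℝ => 1/(12*(y+c)^2)) (-1/(6*(x+c)^3)) x := by
  have h1 : HasDerivAt (fun y : ℝ => 12*(y+c)^2) (12*(2*(x+c))) x := by
    have := (((hasDerivAt_id x).add_const c).pow 2).const_mul (12:ℝ)
    simpa using this
  have := h1.fun_inv (by positivity)
  have h2 := this.const_mul (1:ℝ)
  have heq : (fun y : ℝ => 1/(12*(y+c)^2)) = fun y => 1 * (12*(y+c)^2)⁻¹ := by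
    funext y; simp [one_div]
  rw [heq]
  refine h2.congr_deriv ?_
  field_simp; ring

lemma hasDerivAt_inv_lin {c x : ℝ} (h : 0 < x + c) :
    HasDerivAt (fun y : ℝ => 1/(12*(y+c))) (-1/(12*(x+c)^2)) x := by
  have h1 : HasDerivAt (fun y : ℝ => 12*(y+c)) (12:ℝ) x := by
    simpa using ((hasDerivAt_id x).add_const c).const_mul (12:ℝ)
  have := h1.fun_inv (by positivity)
  have h2 := this.const_mul (1:ℝ)
  have heq : (fun y : ℝ => 1/(12*(y+c))) = fun y => 1 * (12*(y+c))⁻¹ := by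
    funext y; simp [one_div]
  rw [heq]
  refine h2.congr_deriv ?_
  field_simp

lemma hasDerivAt_pfun {x : ℝ} (hx : 0 < x) :
    HasDerivAt pfun (-1/(6*x^3*(x+1)^3)) x := by
  have hx1 : (0:ℝ) < x + 1 := by linarith
  have h1 : HasDerivAt (fun y : ℝ => 1/(12*(y+0)^2)) (-1/(6*(x+0)^3)) x :=
    hasDerivAt_inv_sq (by simpa using hx)
  have h2 : HasDerivAt (fun y : ℝ => 1/(12*(y+1)^2)) (-1/(6*(x+1)^3)) x :=
    hasDerivAt_inv_sq (by simpa using hx1)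
  have h1' : HasDerivAt (fun y : ℝ => 1/(12*y^2)) (-1/(6*x^3)) x := by
    simpa using h1
  have := (hasDerivAt_qfun hx).fun_add (h1'.fun_sub h2)
  unfold pfun
  refine this.congr_deriv ?_
  field_simp
  ring

lemma hasDerivAt_gfun {x : ℝ} (hx : 0 < x) : HasDerivAt gfun (pfun x) x := by
  have hx1 : (0:ℝ) < x + 1 := by linarith
  have h1 : HasDerivAt (fun y : ℝ => 1/(12*(y+0))) (-1/(12*(x+0)^2)) x :=
    hasDerivAt_inv_lin (by simpa using hx)
  have h2 : HasDerivAt (fun y : ℝ => 1/(12*(y+1))) (-1/(12*(x+1)^2)) x :=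
    hasDerivAt_inv_lin (by simpa using hx1)
  have h1' : HasDerivAt (fun y : ℝ => 1/(12*y)) (-1/(12*x^2)) x := by
    simpa using h1
  have := (hasDerivAt_hfun hx).fun_sub (h1'.fun_sub h2)
  unfold gfun pfun
  refine this.congr_deriv ?_
  ring

lemma tendsto_zero_of_abs_le_div (f : ℝ → ℝ) (C : ℝ) (h : ∀ᶠ x in atTop, |f x| ≤ C/x) :
    Tendsto f atTop (nhds 0) := by
  have hg : Tendsto (fun x : ℝ => C/x) atTop (nhds 0) := by
    simpa [div_eq_mul_inv] using (tendsto_inv_atTop_zero : Tendsto (fun x:ℝ => x⁻¹) atTop (nhds 0)).const_mul C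
  refine tendsto_of_tendsto_of_tendsto_of_le_of_le' (by simpa using hg.neg) hg ?_ ?_
  · exact h.mono fun x hx => neg_le_of_abs_le hx
  · exact h.mono fun x hx => le_of_abs_le hx

lemma lim_log : Tendsto (fun x : ℝ => Real.log (x+1) - Real.log x) atTop (nhds 0) := by
  have h1 : Tendsto (fun x : ℝ => 1 + 1/x) atTop (nhds 1) := by
    simpa using tendsto_const_nhds.add (tendsto_inv_atTop_zero : Tendsto (fun x:ℝ => x⁻¹) atTop (nhds 0))
  have h2 : Tendsto (fun x : ℝ => Real.log (1 + 1/x)) atTop (nhds 0) := by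
    have := (Real.continuousAt_log (x := (1:ℝ)) one_ne_zero).tendsto.comp h1
    rwa [Real.log_one] at this
  apply h2.congr'
  filter_upwards [eventually_gt_atTop (0:ℝ)] with x hx
  rw [← Real.log_div (by positivity) hx.ne']
  congr 1
  field_simp

lemma lim_h : Tendsto hfun atTop (nhds 0) := by
  have h1 : Tendsto (fun x : ℝ => x * Real.log (1 + 1/x) + (1/2) * (Real.log (x+1) - Real.log x) - 1)
      atTop (nhds 0) := by
    have := (Real.tendsto_mul_log_one_add_div_atTop 1).add (lim_log.const_mul (1/2:ℝ))
    have h2 := this.sub_const 1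
    simpa using h2
  apply h1.congr'
  filter_upwards [eventually_gt_atTop (0:ℝ)] with x hx
  have : Real.log (1 + 1/x) = Real.log (x+1) - Real.log x := by
    rw [← Real.log_div (by positivity) hx.ne']; congr 1; field_simp
  rw [this]; unfold hfun; ring

lemma lim_q : Tendsto qfun atTop (nhds 0) := by
  have h2 : Tendsto (fun x : ℝ => (x + 1/2) * (1/(x+1) - 1/x)) atTop (nhds 0) := by
    apply tendsto_zero_of_abs_le_div _ 2
    filter_upwards [eventually_ge_atTop (1:ℝ)] with x hx
    have hx0 : (0:ℝ) < x := by linarith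
    have hx1 : (0:ℝ) < x + 1 := by linarith
    have key : (x + 1/2) * (1/(x+1) - 1/x) = -((x+1/2)/(x*(x+1))) := by
      rw [div_sub_div _ _ hx1.ne' hx0.ne', neg_div', ← mul_div_assoc]
      congr 1 <;> ring
    rw [key, abs_neg, abs_of_nonneg (by positivity)]
    rw [div_le_div_iff₀ (by positivity) hx0]
    nlinarith
  have h3 := lim_log.add h2
  rw [add_zero] at h3
  exact h3.congr fun x => by simp only [qfun]

lemma lim_g : Tendsto gfun atTop (nhds 0) := by
  have h2 : Tendsto (fun x : ℝ => 1/(12*x) - 1/(12*(x+1))) atTop (nhds 0) := by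
    apply tendsto_zero_of_abs_le_div _ 1
    filter_upwards [eventually_ge_atTop (1:ℝ)] with x hx
    have hx0 : (0:ℝ) < x := by linarith
    have hx1 : (0:ℝ) < x + 1 := by linarith
    have key : 1/(12*x) - 1/(12*(x+1)) = 1/(12*x*(x+1)) := by
      rw [div_sub_div _ _ (by positivity : (12*x:ℝ) ≠ 0) (by positivity : (12*(x+1):ℝ) ≠ 0),
        div_eq_div_iff (by positivity) (by positivity)]
      ring
    rw [key, abs_of_nonneg (by positivity)]
    rw [div_le_div_iff₀ (by positivity) hx0]
    nlinarith
  have h3 := lim_h.sub h2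
  rw [sub_zero] at h3
  exact h3.congr fun x => by simp only [gfun]

lemma lim_p : Tendsto pfun atTop (nhds 0) := by
  have h2 : Tendsto (fun x : ℝ => 1/(12*x^2) - 1/(12*(x+1)^2)) atTop (nhds 0) := by
    apply tendsto_zero_of_abs_le_div _ 1
    filter_upwards [eventually_ge_atTop (1:ℝ)] with x hx
    have hx0 : (0:ℝ) < x := by linarith
    have hx1 : (0:ℝ) < x + 1 := by linarith
    have key : 1/(12*x^2) - 1/(12*(x+1)^2) = (2*x+1)/(12*x^2*(x+1)^2) := by
      rw [div_sub_div _ _ (by positivity : (12*x^2:ℝ) ≠ 0) (by positivity : (12*(x+1)^2:ℝ) ≠ 0),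
        div_eq_div_iff (by positivity) (by positivity)]
      ring
    rw [key, abs_of_nonneg (by positivity)]
    rw [div_le_div_iff₀ (by positivity) hx0]
    nlinarith
  have h3 := lim_q.add h2
  rw [add_zero] at h3
  exact h3.congr fun x => by simp only [pfun]

lemma qfun_nonpos : ∀ x ∈ Set.Ioi (0:ℝ), qfun x ≤ 0 :=
  neg_aux qfun (fun x => 1/(2*x^2*(x+1)^2)) (fun x hx => hasDerivAt_qfun hx)
    (fun x hx => by have : (0:ℝ) < x := hx; positivity) lim_q

lemma pfun_nonneg : ∀ x ∈ Set.Ioi (0:ℝ), 0 ≤ pfun x :=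
  pos_aux pfun (fun x => -1/(6*x^3*(x+1)^3)) (fun x hx => hasDerivAt_pfun hx)
    (fun x hx => by
      have h0 : (0:ℝ) < x := hx
      exact div_nonpos_of_nonpos_of_nonneg (by norm_num) (by positivity)) lim_p

lemma hfun_nonneg {x : ℝ} (hx : 0 < x) : 0 ≤ hfun x :=
  pos_aux hfun qfun (fun x hx => hasDerivAt_hfun hx) qfun_nonpos lim_h x hx

lemma hfun_le {x : ℝ} (hx : 0 < x) : hfun x ≤ 1/(12*x) - 1/(12*(x+1)) := by
  have := neg_aux gfun pfun (fun x hx => hasDerivAt_gfun hx) pfun_nonneg lim_g x hx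
  unfold gfun at this
  linarith

noncomputable def Efun (x : ℝ) : ℝ := Real.log (Real.Gamma x) - (x - 1/2) * Real.log x + x

lemma Efun_rec {x : ℝ} (hx : 0 < x) : Efun x = Efun (x+1) + hfun x := by
  unfold Efun hfun
  rw [Real.Gamma_add_one hx.ne', Real.log_mul hx.ne' (Real.Gamma_pos_of_pos hx).ne']
  ring

lemma Efun_sub {x : ℝ} (hx : 0 < x) (N : ℕ) :
    0 ≤ Efun x - Efun (x+N) ∧ Efun x - Efun (x+N) ≤ 1/(12*x) - 1/(12*(x+N)) := by
  induction N with
  | zero => simp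
  | succ n ih =>
    have hxn : 0 < x + (n:ℝ) := by positivity
    have hrec := Efun_rec hxn
    have h1 := hfun_nonneg hxn
    have h2 := hfun_le hxn
    have hcast : x + ((n+1 : ℕ):ℝ) = (x + (n:ℝ)) + 1 := by push_cast; ring
    rw [hcast]
    exact ⟨by linarith [ih.1], by linarith [ih.2]⟩

lemma Efun_sub' {x : ℝ} (hx : 0 < x) (N : ℕ) :
    0 ≤ Efun x - Efun (x+N) ∧ Efun x - Efun (x+N) ≤ 1/(12*x) := by
  refine ⟨(Efun_sub hx N).1, le_trans (Efun_sub hx N).2 ?_⟩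
  have : 0 < x + (N:ℝ) := by positivity
  have : 0 ≤ 1/(12*(x+(N:ℝ))) := by positivity
  linarith

lemma lim_Efun_nat : Tendsto (fun n : ℕ => Efun n) atTop (nhds (Real.log (2*π)/2)) := by
  have hstir : Tendsto (fun n : ℕ => Real.log (Stirling.stirlingSeq n)) atTop
      (nhds (Real.log π / 2)) := by
    have h := Stirling.tendsto_stirlingSeq_sqrt_pi
    have hc : ContinuousAt Real.log (√π) :=
      Real.continuousAt_log (by positivity)
    have := hc.tendsto.comp h
    rwa [Real.log_sqrt pi_pos.le] at this
  have hhf : Tendsto (fun n : ℕ => hfun n) atTop (nhds 0) :=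
    lim_h.comp tendsto_natCast_atTop_atTop
  have key : ∀ n : ℕ, 1 ≤ n →
      Efun ((n:ℝ)+1) = Real.log (Stirling.stirlingSeq n) - hfun n + (1/2)*Real.log 2 := by
    intro n hn
    have hn0 : (0:ℝ) < n := by exact_mod_cast hn
    have hform := Stirling.log_stirlingSeq_formula n
    unfold Efun hfun
    rw [show ((n:ℝ)+1) = ((n:ℕ):ℝ) + 1 from rfl, Real.Gamma_nat_eq_factorial n, hform]
    rw [Real.log_mul two_ne_zero hn0.ne', Real.log_div hn0.ne' (Real.exp_ne_zero 1),
      Real.log_exp]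
    ring
  have h2 : Tendsto (fun n : ℕ => Efun ((n:ℝ)+1)) atTop (nhds (Real.log (2*π)/2)) := by
    have hlim := (hstir.sub hhf).add
      (tendsto_const_nhds (x := (1/2)*Real.log 2) (f := atTop (α := ℕ)))
    have : Real.log π / 2 - 0 + (1/2)*Real.log 2 = Real.log (2*π)/2 := by
      rw [Real.log_mul two_ne_zero pi_pos.ne']; ring
    rw [this] at hlim
    apply hlim.congr'
    filter_upwards [eventually_ge_atTop 1] with n hn
    exact (key n hn).symm
  have h3 : Tendsto (fun n : ℕ => Efun (((n+1:ℕ)):ℝ)) atTop (nhds (Real.log (2*π)/2)) := by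
    apply h2.congr
    intro n; norm_num
  exact (tendsto_add_atTop_iff_nat 1).1 h3

lemma logGamma_upper {k y : ℝ} (hk : 1 ≤ k) (h1 : k < y) (h2 : y < k + 1) :
    Real.log (Real.Gamma y) ≤ Real.log (Real.Gamma k) + (y - k) * Real.log k := by
  have h0k : (0:ℝ) < k := by linarith
  have hs := Real.convexOn_log_Gamma.slope_mono_adjacent (Set.mem_Ioi.2 h0k)
      (Set.mem_Ioi.2 (by linarith : (0:ℝ) < k+1)) h1 h2
  simp only [Function.comp_apply] at hs
  have hF : Real.log (Real.Gamma (k+1)) = Real.log k + Real.log (Real.Gamma k) := by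
    rw [Real.Gamma_add_one h0k.ne', Real.log_mul h0k.ne' (Real.Gamma_pos_of_pos h0k).ne']
  rw [hF, div_le_div_iff₀ (by linarith) (by linarith)] at hs
  nlinarith [hs]

lemma logGamma_lower {k y : ℝ} (hk : 2 ≤ k) (h1 : k < y) :
    Real.log (Real.Gamma k) + (y - k) * Real.log (k-1) ≤ Real.log (Real.Gamma y) := by
  have h0k : (0:ℝ) < k - 1 := by linarith
  have hs := Real.convexOn_log_Gamma.slope_mono_adjacent (Set.mem_Ioi.2 h0k)
      (Set.mem_Ioi.2 (by linarith : (0:ℝ) < y)) (by linarith : k - 1 < k) h1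
  simp only [Function.comp_apply] at hs
  have hF : Real.log (Real.Gamma k) = Real.log (k-1) + Real.log (Real.Gamma (k-1)) := by
    rw [show k = (k-1)+1 by ring, Real.Gamma_add_one h0k.ne',
      Real.log_mul h0k.ne' (Real.Gamma_pos_of_pos h0k).ne']
    ring_nf
  rw [div_le_div_iff₀ (by linarith) (by linarith)] at hs
  nlinarith [hs, hF]

set_option maxHeartbeats 1000000 in
lemma Efun_near {y : ℝ} (hy : 3 ≤ y) : |Efun y - Efun (⌊y⌋₊ : ℝ)| ≤ 9/y := by
  set k : ℝ := (⌊y⌋₊ : ℝ) with hkdef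
  have hy0 : (0:ℝ) < y := by linarith
  have hk3 : (3:ℝ) ≤ k := by
    have h : (3:ℕ) ≤ ⌊y⌋₊ := Nat.le_floor (by exact_mod_cast hy)
    rw [hkdef]
    exact_mod_cast h
  have hky : k ≤ y := Nat.floor_le hy0.le
  have hyk1 : y < k + 1 := Nat.lt_floor_add_one y
  rcases eq_or_lt_of_le hky with heq | hlt
  · rw [heq]
    simp
    positivity
  · have h0k : (0:ℝ) < k := by linarith
    set s : ℝ := y - k with hsdef
    have hs0 : 0 < s := by simp [hsdef]; linarith
    have hs1 : s < 1 := by simp [hsdef]; linarith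
    have hu := logGamma_upper (by linarith : (1:ℝ) ≤ k) hlt hyk1
    have hl := logGamma_lower (by linarith : (2:ℝ) ≤ k) hlt
    -- log bounds
    have hld : Real.log y - Real.log k = Real.log (y/k) := (Real.log_div hy0.ne' h0k.ne').symm
    have h1 : k * (Real.log y - Real.log k) ≤ s := by
      have := Real.log_le_sub_one_of_pos (show (0:ℝ) < y/k by positivity)
      rw [← hld] at this
      have h2 := mul_le_mul_of_nonneg_left this h0k.le
      calc k * (Real.log y - Real.log k) ≤ k * (y/k - 1) := h2
        _ = s := by field_simp; linarith
    have h2 : s ≤ y * (Real.log y - Real.log k) := by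
      have := Real.log_le_sub_one_of_pos (show (0:ℝ) < k/y by positivity)
      have hld2 : Real.log k - Real.log y = Real.log (k/y) := (Real.log_div h0k.ne' hy0.ne').symm
      rw [← hld2] at this
      have h2 := mul_le_mul_of_nonneg_left this hy0.le
      have : y * (Real.log k - Real.log y) ≤ y * (k/y - 1) := h2
      have he : y * (k/y - 1) = -s := by field_simp; ring
      nlinarith
    have h3 : (k-1) * (Real.log k - Real.log (k-1)) ≤ 1 := by
      have hk1 : (0:ℝ) < k - 1 := by linarith
      have := Real.log_le_sub_one_of_pos (show (0:ℝ) < k/(k-1) by positivity)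
      have hld3 : Real.log k - Real.log (k-1) = Real.log (k/(k-1)) :=
        (Real.log_div h0k.ne' hk1.ne').symm
      rw [← hld3] at this
      have h2 := mul_le_mul_of_nonneg_left this hk1.le
      calc (k-1) * (Real.log k - Real.log (k-1)) ≤ (k-1) * (k/(k-1) - 1) := h2
        _ = 1 := by field_simp; ring
    have h4 : Real.log (k-1) ≤ Real.log k := by
      exact Real.log_le_log (by linarith) (by linarith)
    have h5 : 0 ≤ Real.log y - Real.log k := by
      have := Real.log_le_log h0k hky
      linarith
    -- abbreviations
    set Fy := Real.log (Real.Gamma y)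
    set Fk := Real.log (Real.Gamma k)
    set Ly := Real.log y
    set Lk := Real.log k
    set Lk1 := Real.log (k-1)
    have hD : Efun y - Efun k =
        (Fy - Fk) - (y - 1/2) * (Ly - Lk) - s * Lk + s := by
      unfold Efun
      simp only [hsdef]
      ring
    rw [abs_le]
    have hk1 : (0:ℝ) < k - 1 := by linarith
    constructor
    · rw [hD]
      have a1 : Lk - Lk1 ≤ 1/(k-1) := by rw [le_div_iff₀ hk1]; nlinarith [h3]
      have a2 : Ly - Lk ≤ s/k := by rw [le_div_iff₀ h0k]; nlinarith [h1]
      have b3 : (y - 1/2) * (Ly - Lk) ≤ y * (Ly - Lk) :=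
        mul_le_mul_of_nonneg_right (by linarith) h5
      have b1 : y * (Ly - Lk) ≤ y * (s/k) := mul_le_mul_of_nonneg_left a2 hy0.le
      have b2 : y * (s/k) ≤ s + s/k := by
        have h := mul_le_mul_of_nonneg_right hyk1.le (show (0:ℝ) ≤ s/k by positivity)
        have he : (k+1)*(s/k) = s + s/k := by field_simp
        linarith
      have b4 : s*Lk - s*Lk1 ≤ 1/(k-1) := by nlinarith [a1, h4, hs1, hs0]
      have c0 : 9/(k+1) ≤ 9/y := by
        rw [div_le_div_iff₀ (by linarith) hy0]; nlinarith
      have c1 : 1/(k-1) + 1/k ≤ 9/(k+1) := by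
        rw [div_add_div _ _ hk1.ne' h0k.ne', div_le_div_iff₀ (by positivity) (by linarith)]
        nlinarith
      have c2 : s/k ≤ 1/k := (div_le_div_iff_of_pos_right h0k).2 hs1.le
      linarith [hl]
    · rw [hD]
      have c2' : s/y ≤ Ly - Lk := by rw [div_le_iff₀ hy0]; nlinarith [h2]
      have d1 : (y - 1/2) * (s/y) ≤ (y - 1/2) * (Ly - Lk) :=
        mul_le_mul_of_nonneg_left c2' (by linarith)
      have d2 : (y - 1/2) * (s/y) = s - s/(2*y) := by field_simp
      have d3 : s/(2*y) ≤ 1/(2*y) := (div_le_div_iff_of_pos_right (by positivity)).2 hs1.le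
      have d4 : 1/(2*y) ≤ 9/y := by rw [div_le_div_iff₀ (by positivity) hy0]; linarith
      linarith [hu]

lemma lim_Efun_real : Tendsto Efun atTop (nhds (Real.log (2*π)/2)) := by
  have hfloor : Tendsto (fun y : ℝ => Efun (⌊y⌋₊ : ℝ)) atTop (nhds (Real.log (2*π)/2)) :=
    lim_Efun_nat.comp tendsto_nat_floor_atTop
  have hdiff : Tendsto (fun y : ℝ => Efun y - Efun (⌊y⌋₊ : ℝ)) atTop (nhds 0) := by
    apply tendsto_zero_of_abs_le_div _ 9
    filter_upwards [eventually_ge_atTop (3:ℝ)] with y hy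
    exact Efun_near hy
  have := hfloor.add hdiff
  rw [add_zero] at this
  exact this.congr fun y => by ring

lemma stirling_core {x : ℝ} (hx : 0 < x) :
    0 ≤ Efun x - Real.log (2*π)/2 ∧ Efun x - Real.log (2*π)/2 ≤ 1/(12*x) := by
  have hshift : Tendsto (fun N : ℕ => Efun (x + N)) atTop (nhds (Real.log (2*π)/2)) := by
    apply lim_Efun_real.comp
    apply tendsto_atTop_add_const_left atTop x tendsto_natCast_atTop_atTop
  have hsub : Tendsto (fun N : ℕ => Efun x - Efun (x + N)) atTop
      (nhds (Efun x - Real.log (2*π)/2)) := tendsto_const_nhds.sub hshift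
  constructor
  · exact ge_of_tendsto hsub (Eventually.of_forall fun N => (Efun_sub' hx N).1)
  · exact le_of_tendsto hsub (Eventually.of_forall fun N => (Efun_sub' hx N).2)


lemma main_identity (a b n : ℝ) (hb : 0 < b) (hab : b < a) (hn : 0 < n) :
    Real.log (Real.Gamma (a*n+1) / (Real.Gamma (b*n+1) * Real.Gamma ((a-b)*n+1)))
      - (n*a*entropy (b/a) + (1/2)*Real.log (a/(2*π*b*(a-b)*n)))
    = (Efun (a*n+1) - Real.log (2*π)/2) - (Efun (b*n+1) - Real.log (2*π)/2)
      - (Efun ((a-b)*n+1) - Real.log (2*π)/2)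
      + hfun (a*n) - hfun (b*n) - hfun ((a-b)*n) := by
  have ha : 0 < a := hb.trans hab
  have hab' : 0 < a - b := by linarith
  have hg1 : 0 < Real.Gamma (a*n+1) := Real.Gamma_pos_of_pos (by positivity)
  have hg2 : 0 < Real.Gamma (b*n+1) := Real.Gamma_pos_of_pos (by positivity)
  have hg3 : 0 < Real.Gamma ((a-b)*n+1) := Real.Gamma_pos_of_pos (by positivity)
  rw [Real.log_div hg1.ne' (by positivity), Real.log_mul hg2.ne' hg3.ne']
  unfold Efun hfun entropy
  have e1 : 1 - b/a = (a-b)/a := by field_simp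
  rw [e1, Real.log_div hb.ne' ha.ne', Real.log_div hab'.ne' ha.ne',
    Real.log_div ha.ne' (by positivity : (2*π*b*(a-b)*n) ≠ 0),
    Real.log_mul (by positivity : (2*π*b*(a-b):ℝ) ≠ 0) hn.ne',
    Real.log_mul (by positivity : (2*π*b:ℝ) ≠ 0) hab'.ne',
    Real.log_mul (by positivity : (2*π:ℝ) ≠ 0) hb.ne',
    Real.log_mul two_ne_zero pi_pos.ne',
    Real.log_mul ha.ne' hn.ne', Real.log_mul hb.ne' hn.ne', Real.log_mul hab'.ne' hn.ne']
  field_simp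
  ring

lemma piece_E {c n : ℝ} (hc : 0 < c) (hn : 0 < n) :
    0 ≤ Efun (c*n+1) - Real.log (2*π)/2 ∧
      Efun (c*n+1) - Real.log (2*π)/2 ≤ 1/(12*c) * (1/n) := by
  have h := stirling_core (show (0:ℝ) < c*n+1 by positivity)
  refine ⟨h.1, h.2.trans ?_⟩
  have h2 : 1/(12*(c*n+1)) ≤ 1/(12*(c*n)) := by
    apply one_div_le_one_div_of_le (by positivity)
    linarith
  have h3 : 1/(12*(c*n)) = 1/(12*c) * (1/n) := by
    field_simp
  linarith

lemma piece_h {c n : ℝ} (hc : 0 < c) (hn : 0 < n) :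
    0 ≤ hfun (c*n) ∧ hfun (c*n) ≤ 1/(12*c) * (1/n) := by
  have hcn : (0:ℝ) < c*n := by positivity
  refine ⟨hfun_nonneg hcn, (hfun_le hcn).trans ?_⟩
  have h2 : 0 ≤ 1/(12*(c*n+1)) := by positivity
  have h3 : 1/(12*(c*n)) = 1/(12*c) * (1/n) := by field_simp
  linarith

theorem stirling_binomial_asymptotics (a b : ℝ) (hb : 0 < b) (hab : b < a) :
    (fun n : ℝ =>
        Real.log (Real.Gamma (a * n + 1) / (Real.Gamma (b * n + 1) * Real.Gamma ((a - b) * n + 1)))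
          - (n * a * entropy (b / a) + (1 / 2) * Real.log (a / (2 * Real.pi * b * (a - b) * n))))
      =O[atTop] (fun n : ℝ => 1 / n) := by
  have ha : 0 < a := hb.trans hab
  have hab' : 0 < a - b := by linarith
  rw [isBigO_iff]
  refine ⟨1/(6*a) + 1/(6*b) + 1/(6*(a-b)), ?_⟩
  filter_upwards [eventually_gt_atTop (0:ℝ)] with n hn
  rw [Real.norm_eq_abs, Real.norm_eq_abs, main_identity a b n hb hab hn]
  have hEa := piece_E ha hn
  have hEb := piece_E hb hn
  have hEc := piece_E hab' hn
  have hha := piece_h ha hn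
  have hhb := piece_h hb hn
  have hhc := piece_h hab' hn
  have habs : |1/n| = 1/n := abs_of_pos (by positivity)
  have expand : (1/(6*a) + 1/(6*b) + 1/(6*(a-b))) * (1/n)
      = 2*(1/(12*a)*(1/n)) + 2*(1/(12*b)*(1/n)) + 2*(1/(12*(a-b))*(1/n)) := by
    field_simp
    ring
  rw [habs, abs_le, expand]
  constructor
  · nlinarith [hEa.1, hEa.2, hEb.1, hEb.2, hEc.1, hEc.2, hha.1, hha.2, hhb.1, hhb.2, hhc.1, hhc.2]
  · nlinarith [hEa.1, hEa.2, hEb.1, hEb.2, hEc.1, hEc.2, hha.1, hha.2, hhb.1, hhb.2, hhc.1, hhc.2]
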